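/- Let n ≥ 2 and n₁ be an integer with 1 ≤ n₁ and n₁+1 < n. Let S be the following finite set of ℝ-linear endomorphisms of B = ℝ[x₁,…,xₙ,y₁,…,yₙ]: f ↦ −x_i·∂f/∂x_r − y_i·∂f/∂y_r for 1 ≤ i < r ≤ n₁; f ↦ −x_i·x_s·f − y_i·∂f/∂y_s for 1 ≤ i ≤ n₁ < s ≤ n; and f ↦ x_s·∂f/∂x_j − y_j·∂f/∂y_s for n₁ < j < s ≤ n. Let m₁, m₂ ∈ ℕ, set v = x_{n₁+1}^{m₁}·y_n^{m₂}, and for k ∈ ℕ let W_k be the ℝ-linear span of all polynomials T₁(T₂(⋯T_j(v)⋯)) with 0 ≤ j ≤ k and T₁,…,T_j ∈ S. Then there exist real constants c₁, c₂ > 0 and K ∈ ℕ such that c₁·k^{n−1} ≤ dim W_k ≤ c₂·k^{n−1} for all k ≥ K. -/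

import Mathlib

open MvPolynomial

/-- Multiplication by a polynomial, as an ℝ-linear endomorphism. -/
noncomputable def mulE {σ : Type} (a : MvPolynomial σ ℝ) :
    Module.End ℝ (MvPolynomial σ ℝ) := LinearMap.mulLeft ℝ a

/-- Formal partial derivative ∂/∂v, as an ℝ-linear endomorphism. -/
noncomputable def pdE {σ : Type} [DecidableEq σ] (v : σ) :
    Module.End ℝ (MvPolynomial σ ℝ) := (pderiv v).toLinearMap

/-- The set S of negative-root-vector endomorphisms for the pair (n₁, n₂ = n)
(x's are `Sum.inl`, y's `Sum.inr`, 0-based indexing: 1 ≤ i < r ≤ n₁ becomes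
i < r, r.val < n₁; 1 ≤ i ≤ n₁ < s ≤ n becomes i.val < n₁ ≤ s.val;
n₁ < j < s ≤ n becomes n₁ ≤ j.val, j < s). -/
def Sset (n n₁ : ℕ) : Set (Module.End ℝ (MvPolynomial (Fin n ⊕ Fin n) ℝ)) :=
  {T | (∃ i r : Fin n, i < r ∧ r.val < n₁ ∧
          T = -(mulE (X (Sum.inl i)) * pdE (Sum.inl r))
                - mulE (X (Sum.inr i)) * pdE (Sum.inr r)) ∨
       (∃ i s : Fin n, i.val < n₁ ∧ n₁ ≤ s.val ∧
          T = -mulE (X (Sum.inl i) * X (Sum.inl s))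
                - mulE (X (Sum.inr i)) * pdE (Sum.inr s)) ∨
       (∃ j s : Fin n, n₁ ≤ j.val ∧ j < s ∧
          T = mulE (X (Sum.inl s)) * pdE (Sum.inl j)
                - mulE (X (Sum.inr j)) * pdE (Sum.inr s))}

/-- W_k: span of all T₁(T₂(⋯T_j(v)⋯)) with 0 ≤ j ≤ k, T's in S. -/
noncomputable def Wk (n : ℕ) (S : Set (Module.End ℝ (MvPolynomial (Fin n ⊕ Fin n) ℝ)))
    (v : MvPolynomial (Fin n ⊕ Fin n) ℝ) (k : ℕ) :
    Submodule ℝ (MvPolynomial (Fin n ⊕ Fin n) ℝ) :=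
  Submodule.span ℝ
    {f | ∃ l : List (Module.End ℝ (MvPolynomial (Fin n ⊕ Fin n) ℝ)),
      l.length ≤ k ∧ (∀ T ∈ l, T ∈ S) ∧ f = l.prod v}

namespace Stmt10


variable {n : ℕ}

/-- integer statistic of an exponent vector -/
def zstat (c : (Fin n ⊕ Fin n) → ℤ) (d : (Fin n ⊕ Fin n) →₀ ℕ) : ℤ :=
  ∑ t : (Fin n ⊕ Fin n), c t * (d t : ℤ)

lemma zstat_add (c : (Fin n ⊕ Fin n) → ℤ) (d e : (Fin n ⊕ Fin n) →₀ ℕ) :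
    zstat c (d + e) = zstat c d + zstat c e := by
  unfold zstat
  rw [← Finset.sum_add_distrib]
  refine Finset.sum_congr rfl fun t _ => ?_
  rw [Finsupp.add_apply]
  push_cast
  ring

lemma zstat_single (c : (Fin n ⊕ Fin n) → ℤ) (u : Fin n ⊕ Fin n) (m : ℕ) :
    zstat c (Finsupp.single u m) = c u * m := by
  unfold zstat
  rw [Finset.sum_eq_single u]
  · rw [Finsupp.single_eq_same]
  · intro b _ hb
    rw [Finsupp.single_eq_of_ne' (Ne.symm hb)]
    simp
  · intro h; exact absurd (Finset.mem_univ u) h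

lemma sub_add_single {d : (Fin n ⊕ Fin n) →₀ ℕ} {u : Fin n ⊕ Fin n}
    (h : 1 ≤ d u) : (d - Finsupp.single u 1) + Finsupp.single u 1 = d := by
  ext t
  rcases eq_or_ne t u with rfl | hne
  · simp only [Finsupp.add_apply, Finsupp.tsub_apply, Finsupp.single_eq_same]
    omega
  · simp [Finsupp.add_apply, Finsupp.tsub_apply, Finsupp.single_eq_of_ne' (Ne.symm hne)]

lemma zstat_sub_single {d : (Fin n ⊕ Fin n) →₀ ℕ} {u : Fin n ⊕ Fin n}
    (c : (Fin n ⊕ Fin n) → ℤ) (h : 1 ≤ d u) :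
    zstat c (d - Finsupp.single u 1) = zstat c d - c u := by
  have := zstat_add c (d - Finsupp.single u 1) (Finsupp.single u 1)
  rw [sub_add_single h, zstat_single] at this
  omega

/-- move one unit of exponent from `u` to `w` -/
noncomputable def mve (d : (Fin n ⊕ Fin n) →₀ ℕ) (u w : Fin n ⊕ Fin n) : (Fin n ⊕ Fin n) →₀ ℕ :=
  Finsupp.single w 1 + (d - Finsupp.single u 1)

lemma zstat_mve (c : (Fin n ⊕ Fin n) → ℤ) {d : (Fin n ⊕ Fin n) →₀ ℕ}
    {u : Fin n ⊕ Fin n} (w : Fin n ⊕ Fin n) (h : 1 ≤ d u) :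
    zstat c (mve d u w) = zstat c d + c w - c u := by
  unfold mve
  rw [zstat_add, zstat_single, zstat_sub_single c h]
  ring

lemma mve_apply {d : (Fin n ⊕ Fin n) →₀ ℕ} {u w t : Fin n ⊕ Fin n} :
    mve d u w t = d t - (if t = u then 1 else 0) + (if t = w then 1 else 0) := by
  unfold mve
  rw [Finsupp.add_apply, Finsupp.tsub_apply, Finsupp.single_apply, Finsupp.single_apply]
  have e1 : (if u = t then (1:ℕ) else 0) = (if t = u then 1 else 0) := by
    rcases eq_or_ne t u with rfl | h
    · simp
    · rw [if_neg h, if_neg (Ne.symm h)]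
  have e2 : (if w = t then (1:ℕ) else 0) = (if t = w then 1 else 0) := by
    rcases eq_or_ne t w with rfl | h
    · simp
    · rw [if_neg h, if_neg (Ne.symm h)]
  rw [e1, e2]
  split_ifs <;> omega

/-- the three coefficient vectors -/
def cY : (Fin n ⊕ Fin n) → ℤ := Sum.elim (fun _ => 0) (fun _ => 1)
def cX : (Fin n ⊕ Fin n) → ℤ := Sum.elim (fun _ => 1) (fun _ => 0)
def cL (n₁ : ℕ) : (Fin n ⊕ Fin n) → ℤ :=
  Sum.elim (fun i => if i.val < n₁ then 1 else -1) (fun _ => 1)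

/-- add one unit at `u` and one at `w` -/
noncomputable def ade (d : (Fin n ⊕ Fin n) →₀ ℕ) (u w : Fin n ⊕ Fin n) : (Fin n ⊕ Fin n) →₀ ℕ :=
  Finsupp.single u 1 + (Finsupp.single w 1 + d)

lemma zstat_ade (c : (Fin n ⊕ Fin n) → ℤ) (d : (Fin n ⊕ Fin n) →₀ ℕ)
    (u w : Fin n ⊕ Fin n) : zstat c (ade d u w) = zstat c d + c u + c w := by
  unfold ade
  rw [zstat_add, zstat_add, zstat_single, zstat_single]
  ring

variable (n) in
/-- admissible exponents after ≤ k steps -/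
def Dk (n₁ m₁ m₂ k : ℕ) : Set ((Fin n ⊕ Fin n) →₀ ℕ) :=
  {d | zstat cY d = m₂ ∧ zstat (cL n₁) d = (m₂ : ℤ) - m₁ ∧ zstat cX d ≤ m₁ + 2 * k}

variable (n) in
noncomputable def Uk (n₁ m₁ m₂ k : ℕ) : Submodule ℝ (MvPolynomial (Fin n ⊕ Fin n) ℝ) :=
  Submodule.span ℝ ((fun d => (monomial d (1:ℝ) : MvPolynomial (Fin n ⊕ Fin n) ℝ)) '' Dk n n₁ m₁ m₂ k)

lemma Dk_mono {n₁ m₁ m₂ k k' : ℕ} (h : k ≤ k') : Dk n n₁ m₁ m₂ k ⊆ Dk n n₁ m₁ m₂ k' := by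
  rintro d ⟨h1, h2, h3⟩
  exact ⟨h1, h2, by omega⟩

lemma Uk_mono {n₁ m₁ m₂ k k' : ℕ} (h : k ≤ k') : Uk n n₁ m₁ m₂ k ≤ Uk n n₁ m₁ m₂ k' :=
  Submodule.span_mono (Set.image_mono (Dk_mono h))

lemma mem_Uk {n₁ m₁ m₂ k : ℕ} {d : (Fin n ⊕ Fin n) →₀ ℕ} (hd : d ∈ Dk n n₁ m₁ m₂ k) :
    (monomial d (1:ℝ) : MvPolynomial (Fin n ⊕ Fin n) ℝ) ∈ Uk n n₁ m₁ m₂ k :=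
  Submodule.subset_span ⟨d, hd, rfl⟩

lemma mulE_X_monomial (u : Fin n ⊕ Fin n) (e : (Fin n ⊕ Fin n) →₀ ℕ) (c : ℝ) :
    mulE (X u) (monomial e c) = monomial (Finsupp.single u 1 + e) c := by
  show X u * monomial e c = _
  rw [X, monomial_mul, one_mul]

lemma mulE_XX_monomial (u w : Fin n ⊕ Fin n) (e : (Fin n ⊕ Fin n) →₀ ℕ) (c : ℝ) :
    mulE (X u * X w) (monomial e c) = monomial (ade e u w) c := by
  show X u * X w * monomial e c = _
  rw [X, X, monomial_mul, monomial_mul, one_mul, one_mul, ade, add_assoc]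

lemma pdE_monomial (u : Fin n ⊕ Fin n) (e : (Fin n ⊕ Fin n) →₀ ℕ) :
    pdE u (monomial e (1:ℝ)) = monomial (e - Finsupp.single u 1) ((e u : ℝ)) := by
  show pderiv u _ = _
  rw [pderiv_monomial, one_mul]

lemma comp_monomial (w u : Fin n ⊕ Fin n) (d : (Fin n ⊕ Fin n) →₀ ℕ) :
    (mulE (X w) * pdE u) (monomial d (1:ℝ)) = monomial (mve d u w) ((d u : ℝ)) := by
  rw [Module.End.mul_apply, pdE_monomial, mulE_X_monomial, mve]

lemma monomial_mve_mem {n₁ m₁ m₂ k : ℕ} {d : (Fin n ⊕ Fin n) →₀ ℕ}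
    (hd : d ∈ Dk n n₁ m₁ m₂ k) {u w : Fin n ⊕ Fin n}
    (h1 : cY w = cY u) (h2 : cL n₁ w = cL n₁ u) (h3 : cX w ≤ cX u) :
    (monomial (mve d u w) ((d u : ℝ)) : MvPolynomial (Fin n ⊕ Fin n) ℝ) ∈
      Uk n n₁ m₁ m₂ (k + 1) := by
  rcases Nat.eq_zero_or_pos (d u) with h0 | h0
  · rw [h0]
    norm_num
  · have : (monomial (mve d u w) ((d u : ℝ)) : MvPolynomial (Fin n ⊕ Fin n) ℝ)
        = (d u : ℝ) • monomial (mve d u w) (1:ℝ) := by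
      simp [smul_monomial]
    rw [this]
    refine Submodule.smul_mem _ _ (mem_Uk ?_)
    obtain ⟨g1, g2, g3⟩ := hd
    refine ⟨?_, ?_, ?_⟩
    · rw [zstat_mve cY w h0, h1, g1]; ring
    · rw [zstat_mve (cL n₁) w h0, h2, g2]; ring
    · rw [zstat_mve cX w h0]; omega

lemma apply_mem {n₁ m₁ m₂ k : ℕ} {T : Module.End ℝ (MvPolynomial (Fin n ⊕ Fin n) ℝ)}
    (hT : T ∈ Sset n n₁) {d : (Fin n ⊕ Fin n) →₀ ℕ} (hd : d ∈ Dk n n₁ m₁ m₂ k) :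
    T (monomial d (1:ℝ)) ∈ Uk n n₁ m₁ m₂ (k + 1) := by
  obtain ⟨i, r, hir, hr, rfl⟩ | ⟨i, s, hi, hs, rfl⟩ | ⟨j, s, hj, hjs, rfl⟩ := hT
  · have hi' : i.val < n₁ := lt_trans hir hr
    rw [LinearMap.sub_apply, LinearMap.neg_apply, comp_monomial, comp_monomial]
    refine Submodule.sub_mem _ (Submodule.neg_mem _ (monomial_mve_mem hd ?_ ?_ ?_))
      (monomial_mve_mem hd ?_ ?_ ?_)
    · rfl
    · show (if i.val < n₁ then (1:ℤ) else -1) = (if r.val < n₁ then 1 else -1)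
      rw [if_pos hi', if_pos hr]
    · exact le_refl _
    · rfl
    · rfl
    · exact le_refl _
  · rw [LinearMap.sub_apply, LinearMap.neg_apply, mulE_XX_monomial, comp_monomial]
    refine Submodule.sub_mem _ (Submodule.neg_mem _ (mem_Uk ?_)) (monomial_mve_mem hd ?_ ?_ ?_)
    · obtain ⟨g1, g2, g3⟩ := hd
      refine ⟨?_, ?_, ?_⟩
      · rw [zstat_ade, g1]
        show _ + (0:ℤ) + 0 = _
        ring
      · rw [zstat_ade, g2]
        show _ + (if i.val < n₁ then (1:ℤ) else -1) + (if s.val < n₁ then (1:ℤ) else -1) = _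
        rw [if_pos hi, if_neg (by omega)]
        ring
      · rw [zstat_ade]
        show _ + (1:ℤ) + 1 ≤ _
        push_cast
        omega
    · rfl
    · rfl
    · exact le_refl _
  · rw [LinearMap.sub_apply, comp_monomial, comp_monomial]
    refine Submodule.sub_mem _ (monomial_mve_mem hd ?_ ?_ ?_) (monomial_mve_mem hd ?_ ?_ ?_)
    · rfl
    · show (if s.val < n₁ then (1:ℤ) else -1) = (if j.val < n₁ then 1 else -1)
      rw [if_neg (by omega), if_neg (by have := hjs; omega)]
    · exact le_refl _
    · rfl
    · rfl
    · exact le_refl _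

lemma map_Uk {n₁ m₁ m₂ k : ℕ} {T : Module.End ℝ (MvPolynomial (Fin n ⊕ Fin n) ℝ)}
    (hT : T ∈ Sset n n₁) {f : MvPolynomial (Fin n ⊕ Fin n) ℝ}
    (hf : f ∈ Uk n n₁ m₁ m₂ k) : T f ∈ Uk n n₁ m₁ m₂ (k + 1) := by
  have h : Uk n n₁ m₁ m₂ k ≤ (Uk n n₁ m₁ m₂ (k + 1)).comap T := by
    rw [Uk, Submodule.span_le]
    rintro _ ⟨d, hd, rfl⟩
    exact apply_mem hT hd
  exact h hf

lemma prod_mem {n₁ m₁ m₂ : ℕ} {v₀ : (Fin n ⊕ Fin n) →₀ ℕ} (hv : v₀ ∈ Dk n n₁ m₁ m₂ 0)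
    (l : List (Module.End ℝ (MvPolynomial (Fin n ⊕ Fin n) ℝ)))
    (hl : ∀ T ∈ l, T ∈ Sset n n₁) :
    l.prod (monomial v₀ (1:ℝ)) ∈ Uk n n₁ m₁ m₂ l.length := by
  induction l with
  | nil =>
    rw [List.prod_nil]
    exact mem_Uk hv
  | cons T l ih =>
    rw [List.prod_cons, Module.End.mul_apply, List.length_cons]
    exact map_Uk (hl T List.mem_cons_self) (ih fun U hU => hl U (List.mem_cons_of_mem T hU))

lemma Wk_le_Uk {n₁ m₁ m₂ k : ℕ} {v₀ : (Fin n ⊕ Fin n) →₀ ℕ} (hv : v₀ ∈ Dk n n₁ m₁ m₂ 0) :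
    Wk n (Sset n n₁) (monomial v₀ (1:ℝ)) k ≤ Uk n n₁ m₁ m₂ k := by
  rw [Wk, Submodule.span_le]
  rintro _ ⟨l, hlen, hl, rfl⟩
  exact Uk_mono hlen (prod_mem hv l hl)

lemma zstat_cY_eq (d : (Fin n ⊕ Fin n) →₀ ℕ) :
    zstat cY d = ∑ i : Fin n, (d (Sum.inr i) : ℤ) := by
  unfold zstat
  rw [Fintype.sum_sum_type]
  simp [cY]

lemma zstat_cX_eq (d : (Fin n ⊕ Fin n) →₀ ℕ) :
    zstat cX d = ∑ i : Fin n, (d (Sum.inl i) : ℤ) := by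
  unfold zstat
  rw [Fintype.sum_sum_type]
  simp [cX]

lemma zstat_cL_eq (n₁ : ℕ) (d : (Fin n ⊕ Fin n) →₀ ℕ) :
    zstat (cL n₁) d = (∑ i : Fin n, (if i.val < n₁ then (1:ℤ) else -1) * (d (Sum.inl i) : ℤ))
      + ∑ i : Fin n, (d (Sum.inr i) : ℤ) := by
  unfold zstat
  rw [Fintype.sum_sum_type]
  simp [cL]

variable (n) in
/-- encoding map used for the cardinality bound -/
def enc (d : (Fin n ⊕ Fin n) →₀ ℕ) : (Fin n → ℕ) × (Fin (n - 1) → ℕ) :=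
  (fun i => d (Sum.inr i), fun j => d (Sum.inl ⟨j.val + 1, by omega⟩))

lemma enc_injOn {n₁ m₁ m₂ k : ℕ} (hn : 0 < n) (h1 : 1 ≤ n₁) :
    Set.InjOn (enc n) (Dk n n₁ m₁ m₂ k) := by
  intro d hd d' hd' h
  have hr : ∀ i : Fin n, d (Sum.inr i) = d' (Sum.inr i) := fun i => congrFun (congrArg Prod.fst h) i
  have hl : ∀ u : Fin n, 1 ≤ u.val → d (Sum.inl u) = d' (Sum.inl u) := by
    intro u hu
    have h2 := congrFun (congrArg Prod.snd h) (⟨u.val - 1, by omega⟩ : Fin (n - 1))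
    simp only [enc] at h2
    rwa [show (⟨u.val - 1 + 1, by omega⟩ : Fin n) = u from Fin.ext (by simp only [Fin.val_mk]; omega)] at h2
  have h0 : d (Sum.inl ⟨0, hn⟩) = d' (Sum.inl ⟨0, hn⟩) := by
    have hL : zstat (cL n₁) d = zstat (cL n₁) d' := by rw [hd.2.1, hd'.2.1]
    rw [zstat_cL_eq, zstat_cL_eq] at hL
    have hsr : ∑ i : Fin n, (d (Sum.inr i) : ℤ) = ∑ i : Fin n, (d' (Sum.inr i) : ℤ) :=
      Finset.sum_congr rfl fun i _ => by rw [hr i]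
    have hse : ∑ i ∈ Finset.univ.erase (⟨0, hn⟩ : Fin n),
        (if i.val < n₁ then (1:ℤ) else -1) * (d (Sum.inl i) : ℤ)
        = ∑ i ∈ Finset.univ.erase (⟨0, hn⟩ : Fin n),
        (if i.val < n₁ then (1:ℤ) else -1) * (d' (Sum.inl i) : ℤ) := by
      refine Finset.sum_congr rfl fun i hi => ?_
      have : 1 ≤ i.val := by
        have := Finset.ne_of_mem_erase hi
        rcases Nat.eq_zero_or_pos i.val with h' | h'
        · exact absurd (Fin.ext h') this
        · exact h'
      rw [hl i this]
    have split : ∀ dd : (Fin n ⊕ Fin n) →₀ ℕ,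
        (∑ i : Fin n, (if i.val < n₁ then (1:ℤ) else -1) * (dd (Sum.inl i) : ℤ))
        = (dd (Sum.inl ⟨0, hn⟩) : ℤ) + ∑ i ∈ Finset.univ.erase (⟨0, hn⟩ : Fin n),
            (if i.val < n₁ then (1:ℤ) else -1) * (dd (Sum.inl i) : ℤ) := by
      intro dd
      rw [← Finset.add_sum_erase _ _ (Finset.mem_univ (⟨0, hn⟩ : Fin n)),
        if_pos (show ((⟨0, hn⟩ : Fin n) : ℕ) < n₁ from h1), one_mul]
    rw [split d, split d', hse, hsr] at hL
    have : (d (Sum.inl ⟨0, hn⟩) : ℤ) = (d' (Sum.inl ⟨0, hn⟩) : ℤ) := by omega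
    exact_mod_cast this
  ext t
  rcases t with u | i
  · rcases Nat.eq_zero_or_pos u.val with h' | h'
    · rwa [show u = ⟨0, hn⟩ from Fin.ext h']
    · exact hl u h'
  · exact hr i

variable (n) in
noncomputable def BoxF (m₂ M : ℕ) : Finset ((Fin n → ℕ) × (Fin (n - 1) → ℕ)) :=
  (Fintype.piFinset fun _ => Finset.range (m₂ + 1)) ×ˢ
    (Fintype.piFinset fun _ => Finset.range (M + 1))

lemma enc_maps {n₁ m₁ m₂ k : ℕ} {d : (Fin n ⊕ Fin n) →₀ ℕ} (hd : d ∈ Dk n n₁ m₁ m₂ k) :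
    enc n d ∈ BoxF n m₂ (m₁ + 2 * k) := by
  obtain ⟨g1, g2, g3⟩ := hd
  rw [zstat_cY_eq] at g1
  rw [zstat_cX_eq] at g3
  rw [BoxF, Finset.mem_product]
  constructor
  · rw [Fintype.mem_piFinset]
    intro i
    rw [Finset.mem_range]
    have : (d (Sum.inr i) : ℤ) ≤ m₂ := by
      rw [← g1]
      exact Finset.single_le_sum (f := fun i => (d (Sum.inr i) : ℤ))
        (fun i _ => by positivity) (Finset.mem_univ i)
    simp only [enc]
    omega
  · rw [Fintype.mem_piFinset]
    intro j
    rw [Finset.mem_range]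
    have : (d (Sum.inl ⟨j.val + 1, by omega⟩) : ℤ) ≤ ∑ i : Fin n, (d (Sum.inl i) : ℤ) :=
      Finset.single_le_sum (f := fun i => (d (Sum.inl i) : ℤ))
        (fun i _ => by positivity) (Finset.mem_univ _)
    simp only [enc]
    omega

lemma BoxF_card (m₂ M : ℕ) : (BoxF n m₂ M).card = (m₂ + 1) ^ n * (M + 1) ^ (n - 1) := by
  rw [BoxF, Finset.card_product, Fintype.card_piFinset, Fintype.card_piFinset]
  simp [Finset.card_range]

lemma Dk_finite {n₁ m₁ m₂ k : ℕ} (hn : 0 < n) (h1 : 1 ≤ n₁) :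
    (Dk n n₁ m₁ m₂ k).Finite := by
  refine Set.Finite.of_finite_image ?_ (enc_injOn hn h1)
  exact Set.Finite.subset (BoxF n m₂ (m₁ + 2 * k)).finite_toSet
    (by rintro _ ⟨d, hd, rfl⟩; exact enc_maps hd)

lemma Dk_card_le {n₁ m₁ m₂ k : ℕ} (hn : 0 < n) (h1 : 1 ≤ n₁) :
    (Dk_finite (n₁ := n₁) (m₁ := m₁) (m₂ := m₂) (k := k) hn h1).toFinset.card ≤
      (m₂ + 1) ^ n * (m₁ + 2 * k + 1) ^ (n - 1) := by
  rw [← BoxF_card]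
  refine Finset.card_le_card_of_injOn (enc n) ?_ ?_
  · intro d hd
    rw [Finset.mem_coe, Set.Finite.mem_toFinset] at hd
    exact enc_maps hd
  · intro d hd d' hd' hh
    rw [Set.Finite.coe_toFinset] at hd hd'
    exact enc_injOn hn h1 hd hd' hh

variable (n) in
/-- error space: span of monomials deficient in y_b -/
noncomputable def Err (b : Fin n) (m₂ : ℕ) : Submodule ℝ (MvPolynomial (Fin n ⊕ Fin n) ℝ) :=
  Submodule.span ℝ {f | ∃ d : (Fin n ⊕ Fin n) →₀ ℕ, d (Sum.inr b) < m₂ ∧ f = monomial d 1}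

lemma monomial_mem_Err {b : Fin n} {m₂ : ℕ} {d : (Fin n ⊕ Fin n) →₀ ℕ} (c : ℝ)
    (h : d (Sum.inr b) < m₂) : (monomial d c : MvPolynomial (Fin n ⊕ Fin n) ℝ) ∈ Err n b m₂ := by
  have : (monomial d c : MvPolynomial (Fin n ⊕ Fin n) ℝ) = c • monomial d 1 := by
    simp [smul_monomial]
  rw [this]
  exact Submodule.smul_mem _ _ (Submodule.subset_span ⟨d, h, rfl⟩)

/-- type-B operator for a pair -/
noncomputable def TB (p : Fin n × Fin n) : Module.End ℝ (MvPolynomial (Fin n ⊕ Fin n) ℝ) :=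
  -mulE (X (Sum.inl p.1) * X (Sum.inl p.2)) - mulE (X (Sum.inr p.1)) * pdE (Sum.inr p.2)

lemma TB_mem {n₁ : ℕ} {p : Fin n × Fin n} (hp1 : p.1.val < n₁) (hp2 : n₁ ≤ p.2.val) :
    TB p ∈ Sset n n₁ :=
  Or.inr (Or.inl ⟨p.1, p.2, hp1, hp2, rfl⟩)

lemma TB_monomial (p : Fin n × Fin n) (d : (Fin n ⊕ Fin n) →₀ ℕ) :
    TB p (monomial d (1:ℝ)) = -(monomial (ade d (Sum.inl p.1) (Sum.inl p.2)) 1)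
      - monomial (mve d (Sum.inr p.2) (Sum.inr p.1)) ((d (Sum.inr p.2) : ℝ)) := by
  rw [TB, LinearMap.sub_apply, LinearMap.neg_apply, mulE_XX_monomial, comp_monomial]

lemma ade_inr (d : (Fin n ⊕ Fin n) →₀ ℕ) (u w : Fin n) (t : Fin n) :
    ade d (Sum.inl u) (Sum.inl w) (Sum.inr t) = d (Sum.inr t) := by
  rw [ade, Finsupp.add_apply, Finsupp.add_apply,
    Finsupp.single_eq_of_ne (by simp), Finsupp.single_eq_of_ne (by simp)]
  omega

lemma TB_maps_Err {b : Fin n} {m₂ : ℕ} {p : Fin n × Fin n} (hne : p.1 ≠ b)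
    {f : MvPolynomial (Fin n ⊕ Fin n) ℝ} (hf : f ∈ Err n b m₂) : TB p f ∈ Err n b m₂ := by
  have h : Err n b m₂ ≤ (Err n b m₂).comap (TB p) := by
    rw [Err, Submodule.span_le]
    rintro _ ⟨d, hd, rfl⟩
    rw [SetLike.mem_coe, Submodule.mem_comap, TB_monomial]
    refine Submodule.sub_mem _ (Submodule.neg_mem _ (monomial_mem_Err 1 ?_)) ?_
    · rwa [ade_inr]
    · rcases Nat.eq_zero_or_pos (d (Sum.inr p.2)) with h0 | h0
      · rw [h0]
        norm_num
      · refine monomial_mem_Err _ ?_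
        rw [mve_apply]
        have : ¬((Sum.inr b : Fin n ⊕ Fin n) = Sum.inr p.1) :=
          fun h => hne (Sum.inr_injective h).symm
        rw [if_neg this]
        split_ifs <;> omega
  exact h hf

/-- exponent contribution of a pair -/
noncomputable def wexp (p : Fin n × Fin n) : (Fin n ⊕ Fin n) →₀ ℕ :=
  Finsupp.single (Sum.inl p.1) 1 + Finsupp.single (Sum.inl p.2) 1

/-- total exponent contribution of a list of pairs -/
noncomputable def cexpL (L : List (Fin n × Fin n)) : (Fin n ⊕ Fin n) →₀ ℕ :=
  (L.map wexp).sum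

lemma cexpL_nil : cexpL (n := n) [] = 0 := rfl

lemma cexpL_cons (p : Fin n × Fin n) (L : List (Fin n × Fin n)) :
    cexpL (p :: L) = wexp p + cexpL L := by
  rw [cexpL, List.map_cons, List.sum_cons, cexpL]

lemma cexpL_inr (L : List (Fin n × Fin n)) (t : Fin n) : cexpL L (Sum.inr t) = 0 := by
  induction L with
  | nil => rfl
  | cons p L ih =>
    rw [cexpL_cons, Finsupp.add_apply, ih, wexp, Finsupp.add_apply]
    simp [Finsupp.single_apply]

lemma ade_wexp (p : Fin n × Fin n) (E : (Fin n ⊕ Fin n) →₀ ℕ) :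
    ade E (Sum.inl p.1) (Sum.inl p.2) = wexp p + E := by
  rw [ade, wexp, add_assoc]

/-- main structural lemma for products of type-B operators -/
lemma prod_TB {n₁ m₁ m₂ : ℕ} {a b : Fin n}
    (L : List (Fin n × Fin n)) (hL : ∀ p ∈ L, p.1 ≠ b) :
    ∃ e ∈ Err n b m₂,
      ((L.map TB).prod) (monomial (Finsupp.single (Sum.inl a) m₁ + Finsupp.single (Sum.inr b) m₂) (1:ℝ))
        = ((-1:ℝ)) ^ L.length •
            (monomial (cexpL L + (Finsupp.single (Sum.inl a) m₁ + Finsupp.single (Sum.inr b) m₂)) (1:ℝ))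
          + e := by
  set v₀ : (Fin n ⊕ Fin n) →₀ ℕ :=
    Finsupp.single (Sum.inl a) m₁ + Finsupp.single (Sum.inr b) m₂ with hv₀
  induction L with
  | nil =>
    refine ⟨0, Submodule.zero_mem _, ?_⟩
    simp [cexpL_nil]
  | cons p L ih =>
    have hpb : p.1 ≠ b := hL p List.mem_cons_self
    obtain ⟨e, he, heq⟩ := ih (fun q hq => hL q (List.mem_cons_of_mem p hq))
    set E : (Fin n ⊕ Fin n) →₀ ℕ := cexpL L + v₀ with hE
    have hEr : ∀ t : Fin n, E (Sum.inr t) = if b = t then m₂ else 0 := by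
      intro t
      rw [hE, Finsupp.add_apply, cexpL_inr, hv₀, Finsupp.add_apply]
      simp [Finsupp.single_apply]
    have hsecond : (monomial (mve E (Sum.inr p.2) (Sum.inr p.1)) ((E (Sum.inr p.2) : ℝ))
        : MvPolynomial (Fin n ⊕ Fin n) ℝ) ∈ Err n b m₂ := by
      rcases Nat.eq_zero_or_pos (E (Sum.inr p.2)) with h0 | h0
      · rw [h0]
        norm_num
      · refine monomial_mem_Err _ ?_
        have hb2 : b = p.2 := by
          by_contra hc
          rw [hEr p.2, if_neg hc] at h0
          omega
        have hm : 1 ≤ m₂ := by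
          rw [hEr p.2, if_pos hb2] at h0
          omega
        rw [mve_apply, if_pos (show (Sum.inr b : Fin n ⊕ Fin n) = Sum.inr p.2 by rw [hb2]),
          if_neg (show ¬((Sum.inr b : Fin n ⊕ Fin n) = Sum.inr p.1) from
            fun h => hpb (Sum.inr_injective h).symm),
          hEr b, if_pos rfl]
        omega
    refine ⟨((-1:ℝ)) ^ L.length • (-(monomial (mve E (Sum.inr p.2) (Sum.inr p.1))
        ((E (Sum.inr p.2) : ℝ)))) + TB p e,
      Submodule.add_mem _ (Submodule.smul_mem _ _ (Submodule.neg_mem _ hsecond))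
        (TB_maps_Err hpb he), ?_⟩
    rw [List.map_cons, List.prod_cons, Module.End.mul_apply, heq, map_add, LinearMap.map_smul,
      TB_monomial, cexpL_cons, List.length_cons, ade_wexp]
    have hexp : wexp p + cexpL L + v₀ = wexp p + E := by rw [hE, add_assoc]
    rw [hexp, pow_succ]
    set A : MvPolynomial (Fin n ⊕ Fin n) ℝ := monomial (wexp p + E) 1
    set B : MvPolynomial (Fin n ⊕ Fin n) ℝ :=
      monomial (mve E (Sum.inr p.2) (Sum.inr p.1)) ((E (Sum.inr p.2) : ℝ))
    module

variable (n) in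
/-- the n−1 basic pairs -/
def prf (n₁ : ℕ) (h2 : n₁ + 1 < n) (j : Fin (n - 1)) : Fin n × Fin n :=
  if h : j.val + 1 < n₁ then (⟨j.val + 1, by omega⟩, ⟨n₁, by omega⟩)
  else (⟨0, by omega⟩, ⟨j.val + 1, by have := j.isLt; omega⟩)

lemma prf_prop {n₁ : ℕ} (h1 : 1 ≤ n₁) (h2 : n₁ + 1 < n) (j : Fin (n - 1)) :
    (prf n n₁ h2 j).1.val < n₁ ∧ n₁ ≤ (prf n n₁ h2 j).2.val := by
  rw [prf]
  split_ifs with h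
  · exact ⟨h, le_refl n₁⟩
  · refine ⟨h1, ?_⟩
    show n₁ ≤ j.val + 1
    omega

lemma prf_fst_ne {n₁ : ℕ} (h2 : n₁ + 1 < n) {b : Fin n} (hb : b.val = n - 1)
    (h1 : 1 ≤ n₁) (j : Fin (n - 1)) : (prf n n₁ h2 j).1 ≠ b := by
  have := (prf_prop h1 h2 j).1
  intro hc
  rw [hc, hb] at this
  omega

variable (n) in
noncomputable def cexp (n₁ : ℕ) (h2 : n₁ + 1 < n) (t : Fin (n - 1) → ℕ) :
    (Fin n ⊕ Fin n) →₀ ℕ :=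
  ∑ j : Fin (n - 1), t j • wexp (prf n n₁ h2 j)

lemma cexp_eval {n₁ : ℕ} (h2 : n₁ + 1 < n) (t : Fin (n - 1) → ℕ) (u : Fin n) :
    cexp n n₁ h2 t (Sum.inl u)
      = ∑ j : Fin (n - 1), t j * ((if (prf n n₁ h2 j).1 = u then 1 else 0)
          + (if (prf n n₁ h2 j).2 = u then 1 else 0)) := by
  rw [cexp, Finsupp.finset_sum_apply]
  refine Finset.sum_congr rfl fun j _ => ?_
  rw [Finsupp.smul_apply, wexp, Finsupp.add_apply, smul_eq_mul]
  simp only [Finsupp.single_apply, Sum.inl.injEq]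

lemma cexp_eval_ne {n₁ : ℕ} (h2 : n₁ + 1 < n) (t : Fin (n - 1) → ℕ) (j : Fin (n - 1))
    (hj : j.val + 1 ≠ n₁) :
    cexp n n₁ h2 t (Sum.inl (⟨j.val + 1, by have := j.isLt; omega⟩ : Fin n)) = t j := by
  rw [cexp_eval]
  rw [Finset.sum_eq_single j]
  · rcases lt_or_ge (j.val + 1) n₁ with h | h
    · rw [prf, dif_pos h]
      simp [Fin.mk.injEq, show ¬(n₁ = (j : ℕ) + 1) from by omega]
    · rw [prf, dif_neg (by omega)]
      simp [Fin.mk.injEq]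
  · intro j' _ hne
    have hv : j'.val ≠ j.val := fun hv => hne (Fin.ext hv)
    rcases lt_or_ge (j'.val + 1) n₁ with h | h
    · rw [prf, dif_pos h]
      simp [Fin.mk.injEq, show ¬((j' : ℕ) + 1 = (j : ℕ) + 1) from by omega,
        show ¬(n₁ = (j : ℕ) + 1) from by omega, hv]
    · rw [prf, dif_neg (by omega)]
      simp [Fin.mk.injEq, show ¬((j' : ℕ) + 1 = (j : ℕ) + 1) from by omega, hv]
  · intro h
    exact absurd (Finset.mem_univ j) h

lemma cexp_eval_n₁ {n₁ : ℕ} (h1 : 1 ≤ n₁) (h2 : n₁ + 1 < n) (t : Fin (n - 1) → ℕ) :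
    cexp n n₁ h2 t (Sum.inl (⟨n₁, Nat.lt_of_succ_lt h2⟩ : Fin n))
      = ∑ j : Fin (n - 1), t j * (if j.val < n₁ then 1 else 0) := by
  rw [cexp_eval]
  refine Finset.sum_congr rfl fun j _ => ?_
  rcases lt_or_ge (j.val + 1) n₁ with h | h
  · rw [prf, dif_pos h]
    simp [Fin.mk.injEq, show ¬((j : ℕ) + 1 = n₁) from by omega,
      show (j : ℕ) < n₁ from by omega]
  · rw [prf, dif_neg (by omega)]
    rcases eq_or_ne (j.val + 1) n₁ with he | he
    · simp [Fin.mk.injEq, he, show ¬((0 : ℕ) = n₁) from by omega,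
        show (j : ℕ) < n₁ from by omega]
    · simp [Fin.mk.injEq, show ¬((0 : ℕ) = n₁) from by omega,
        show ¬((j : ℕ) + 1 = n₁) from by omega, show ¬((j : ℕ) < n₁) from by omega]

lemma cexp_inj {n₁ : ℕ} (h1 : 1 ≤ n₁) (h2 : n₁ + 1 < n) :
    Function.Injective (cexp n n₁ h2) := by
  intro t t' h
  have key : ∀ j : Fin (n - 1), j.val + 1 ≠ n₁ → t j = t' j := by
    intro j hj
    have hs : cexp n n₁ h2 t (Sum.inl (⟨j.val + 1, by have := j.isLt; omega⟩ : Fin n))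
        = cexp n n₁ h2 t' (Sum.inl (⟨j.val + 1, by have := j.isLt; omega⟩ : Fin n)) := by
      rw [h]
    rwa [cexp_eval_ne h2 t j hj, cexp_eval_ne h2 t' j hj] at hs
  funext j
  rcases eq_or_ne (j.val + 1) n₁ with he | he
  swap
  · exact key j he
  · have hs : cexp n n₁ h2 t (Sum.inl (⟨n₁, by omega⟩ : Fin n))
        = cexp n n₁ h2 t' (Sum.inl (⟨n₁, by omega⟩ : Fin n)) := by rw [h]
    rw [cexp_eval_n₁ h1 h2 t, cexp_eval_n₁ h1 h2 t'] at hs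
    have split : ∀ s : Fin (n - 1) → ℕ,
        (∑ j' : Fin (n - 1), s j' * (if j'.val < n₁ then 1 else 0))
        = s j * 1 + ∑ j' ∈ Finset.univ.erase j, s j' * (if j'.val < n₁ then 1 else 0) := by
      intro s
      rw [← Finset.add_sum_erase _ _ (Finset.mem_univ j), if_pos (by omega)]
    rw [split t, split t'] at hs
    have herase : (∑ j' ∈ Finset.univ.erase j, t j' * (if j'.val < n₁ then 1 else 0))
        = ∑ j' ∈ Finset.univ.erase j, t' j' * (if j'.val < n₁ then 1 else 0) := by
      refine Finset.sum_congr rfl fun j' hj' => ?_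
      have hne : j' ≠ j := Finset.ne_of_mem_erase hj'
      have hcc : j'.val + 1 ≠ n₁ := fun hc => hne (Fin.ext (by omega))
      rw [key j' hcc]
    rw [herase] at hs
    omega

variable (n) in
noncomputable def Lt (n₁ : ℕ) (h2 : n₁ + 1 < n) (t : Fin (n - 1) → ℕ) :
    List (Fin n × Fin n) :=
  (List.finRange (n - 1)).flatMap fun j => List.replicate (t j) (prf n n₁ h2 j)

lemma cexpL_append (L1 L2 : List (Fin n × Fin n)) :
    cexpL (L1 ++ L2) = cexpL L1 + cexpL L2 := by
  rw [cexpL, cexpL, cexpL, List.map_append, List.sum_append]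

lemma cexpL_replicate (c : ℕ) (p : Fin n × Fin n) :
    cexpL (List.replicate c p) = c • wexp p := by
  rw [cexpL, List.map_replicate, List.sum_replicate]

lemma cexpL_Lt {n₁ : ℕ} (h2 : n₁ + 1 < n) (t : Fin (n - 1) → ℕ) :
    cexpL (Lt n n₁ h2 t) = cexp n n₁ h2 t := by
  have key : ∀ J : List (Fin (n - 1)),
      cexpL (J.flatMap fun j => List.replicate (t j) (prf n n₁ h2 j))
        = (J.map fun j => t j • wexp (prf n n₁ h2 j)).sum := by
    intro J
    induction J with
    | nil => rfl
    | cons j J ih =>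
      rw [List.flatMap_cons, cexpL_append, ih, List.map_cons, List.sum_cons, cexpL_replicate]
  rw [Lt, key, cexp, Fin.sum_univ_def]

lemma length_Lt {n₁ : ℕ} (h2 : n₁ + 1 < n) (t : Fin (n - 1) → ℕ) :
    (Lt n n₁ h2 t).length = ∑ j : Fin (n - 1), t j := by
  have key : ∀ J : List (Fin (n - 1)),
      (J.flatMap fun j => List.replicate (t j) (prf n n₁ h2 j)).length
        = (J.map fun j => t j).sum := by
    intro J
    induction J with
    | nil => rfl
    | cons j J ih =>
      rw [List.flatMap_cons, List.length_append, List.map_cons, List.sum_cons, ih,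
        List.length_replicate]
  rw [Lt, key, Fin.sum_univ_def]

lemma Lt_mem_Sset {n₁ : ℕ} (h1 : 1 ≤ n₁) (h2 : n₁ + 1 < n) (t : Fin (n - 1) → ℕ) :
    ∀ T ∈ (Lt n n₁ h2 t).map TB, T ∈ Sset n n₁ := by
  intro T hT
  obtain ⟨p, hp, rfl⟩ := List.mem_map.1 hT
  obtain ⟨j, _, hp2⟩ := List.mem_flatMap.1 hp
  have := List.eq_of_mem_replicate hp2
  subst this
  exact TB_mem (prf_prop h1 h2 j).1 (prf_prop h1 h2 j).2

lemma Err_coeff {b : Fin n} {m₂ : ℕ} {f : MvPolynomial (Fin n ⊕ Fin n) ℝ}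
    (hf : f ∈ Err n b m₂) (M : (Fin n ⊕ Fin n) →₀ ℕ) (hM : m₂ ≤ M (Sum.inr b)) :
    coeff M f = 0 := by
  have h : Err n b m₂ ≤ LinearMap.ker (lcoeff ℝ M) := by
    rw [Err, Submodule.span_le]
    rintro _ ⟨d, hd, rfl⟩
    rw [SetLike.mem_coe, LinearMap.mem_ker, lcoeff_apply, coeff_monomial, if_neg]
    intro hc
    rw [hc] at hd
    omega
  have h2 := h hf
  rwa [LinearMap.mem_ker, lcoeff_apply] at h2

lemma finrank_Wk_le {n₁ m₁ m₂ k : ℕ} (hn : 0 < n) (h1 : 1 ≤ n₁)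
    {v₀ : (Fin n ⊕ Fin n) →₀ ℕ} (hv : v₀ ∈ Dk n n₁ m₁ m₂ 0) :
    Module.Finite ℝ ↥(Wk n (Sset n n₁) (monomial v₀ (1:ℝ)) k) ∧
      Module.finrank ℝ ↥(Wk n (Sset n n₁) (monomial v₀ (1:ℝ)) k) ≤
        (m₂ + 1) ^ n * (m₁ + 2 * k + 1) ^ (n - 1) := by
  set DF := (Dk_finite (n₁ := n₁) (m₁ := m₁) (m₂ := m₂) (k := k) hn h1).toFinset with hDF
  have hUk : Uk n n₁ m₁ m₂ k
      = Submodule.span ℝ ((DF.image fun d => (monomial d (1:ℝ) :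
          MvPolynomial (Fin n ⊕ Fin n) ℝ)) : Set (MvPolynomial (Fin n ⊕ Fin n) ℝ)) := by
    rw [Uk]
    congr 1
    rw [Finset.coe_image, hDF, Set.Finite.coe_toFinset]
  have hfd : FiniteDimensional ℝ ↥(Uk n n₁ m₁ m₂ k) := by
    rw [hUk]
    exact FiniteDimensional.span_of_finite ℝ (Finset.finite_toSet _)
  have hle := Wk_le_Uk (k := k) hv
  refine ⟨Submodule.finiteDimensional_of_le hle, ?_⟩
  refine le_trans (Submodule.finrank_mono hle) ?_
  calc Module.finrank ℝ ↥(Uk n n₁ m₁ m₂ k)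
      ≤ (DF.image fun d => (monomial d (1:ℝ) : MvPolynomial (Fin n ⊕ Fin n) ℝ)).card := by
        rw [hUk]
        exact finrank_span_finset_le_card _
    _ ≤ DF.card := Finset.card_image_le
    _ ≤ (m₂ + 1) ^ n * (m₁ + 2 * k + 1) ^ (n - 1) := Dk_card_le hn h1

lemma card_le_finrank_Wk {n₁ m₁ m₂ k : ℕ} (h1 : 1 ≤ n₁) (h2 : n₁ + 1 < n)
    (a b : Fin n) (ha : (a : ℕ) = n₁) (hb : (b : ℕ) = n - 1)
    (hfin : Module.Finite ℝ ↥(Wk n (Sset n n₁)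
      (monomial (Finsupp.single (Sum.inl a) m₁ + Finsupp.single (Sum.inr b) m₂) (1:ℝ)) k)) :
    (k / (n - 1) + 1) ^ (n - 1) ≤ Module.finrank ℝ ↥(Wk n (Sset n n₁)
      (monomial (Finsupp.single (Sum.inl a) m₁ + Finsupp.single (Sum.inr b) m₂) (1:ℝ)) k) := by
  haveI := hfin
  set v₀ : (Fin n ⊕ Fin n) →₀ ℕ :=
    Finsupp.single (Sum.inl a) m₁ + Finsupp.single (Sum.inr b) m₂ with hv₀
  set q := k / (n - 1) with hq
  set tm : (Fin (n - 1) → Fin (q + 1)) → (Fin (n - 1) → ℕ) := fun τ j => (τ j : ℕ) with htm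
  set F : (Fin (n - 1) → Fin (q + 1)) → MvPolynomial (Fin n ⊕ Fin n) ℝ :=
    fun τ => (((Lt n n₁ h2 (tm τ)).map TB).prod) (monomial v₀ (1:ℝ)) with hF
  have hlen : ∀ τ, (Lt n n₁ h2 (tm τ)).length ≤ k := by
    intro τ
    rw [length_Lt]
    calc ∑ j : Fin (n - 1), tm τ j ≤ ∑ _j : Fin (n - 1), q :=
          Finset.sum_le_sum fun j _ => Nat.lt_succ_iff.1 (τ j).isLt
      _ = (n - 1) * q := by rw [Finset.sum_const, Finset.card_univ, Fintype.card_fin, smul_eq_mul]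
      _ ≤ k := by rw [mul_comm]; exact Nat.div_mul_le_self k (n - 1)
  have hmem : ∀ τ, F τ ∈ Wk n (Sset n n₁) (monomial v₀ (1:ℝ)) k := by
    intro τ
    refine Submodule.subset_span ⟨(Lt n n₁ h2 (tm τ)).map TB, ?_, Lt_mem_Sset h1 h2 _, rfl⟩
    rw [List.length_map]
    exact hlen τ
  set Mexp : (Fin (n - 1) → Fin (q + 1)) → ((Fin n ⊕ Fin n) →₀ ℕ) :=
    fun τ => cexp n n₁ h2 (tm τ) + v₀ with hMexp
  have hMb : ∀ τ, Mexp τ (Sum.inr b) = m₂ := by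
    intro τ
    rw [hMexp]
    rw [Finsupp.add_apply, ← cexpL_Lt h2 (tm τ), cexpL_inr, hv₀, Finsupp.add_apply,
      Finsupp.single_eq_of_ne (by simp), Finsupp.single_eq_same]
    norm_num
  have htm_inj : Function.Injective tm := by
    intro τ τ' h
    funext j
    exact Fin.ext (congrFun h j)
  have hMexp_inj : Function.Injective Mexp := by
    intro τ τ' h
    rw [hMexp] at h
    exact htm_inj (cexp_inj h1 h2 (add_right_cancel h))
  have hcoeff : ∀ τ τ', coeff (Mexp τ') (F τ)
      = (-1:ℝ) ^ (Lt n n₁ h2 (tm τ)).length * (if τ = τ' then 1 else 0) := by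
    intro τ τ'
    obtain ⟨e, he, heq⟩ := prod_TB (n₁ := n₁) (m₁ := m₁) (m₂ := m₂) (a := a) (b := b)
      (Lt n n₁ h2 (tm τ)) (fun p hp => by
        obtain ⟨j, _, hp2⟩ := List.mem_flatMap.1 hp
        rw [List.eq_of_mem_replicate hp2]
        exact prf_fst_ne h2 hb h1 j)
    rw [← hv₀] at heq
    have hfold : cexpL (Lt n n₁ h2 (tm τ)) + v₀ = Mexp τ := by rw [cexpL_Lt h2 (tm τ)]
    simp only [hF]
    rw [heq, hfold, coeff_add, coeff_smul, Err_coeff he _ (le_of_eq (hMb τ').symm),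
      coeff_monomial, smul_eq_mul, add_zero]
    rcases eq_or_ne τ τ' with rfl | hne
    · rw [if_pos rfl, if_pos rfl]
    · rw [if_neg (fun hc => hne (hMexp_inj hc)), if_neg hne]
  have hFli : LinearIndependent ℝ F := by
    rw [Fintype.linearIndependent_iff]
    intro g hg τ₀
    have h0 : coeff (Mexp τ₀) (∑ τ, g τ • F τ) = 0 := by rw [hg, coeff_zero]
    rw [coeff_sum] at h0
    simp only [coeff_smul, smul_eq_mul, hcoeff] at h0
    rw [Finset.sum_eq_single τ₀ (fun τ _ hτ => by rw [if_neg hτ]; ring)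
      (fun h => absurd (Finset.mem_univ τ₀) h), if_pos rfl, mul_one] at h0
    rcases mul_eq_zero.1 h0 with h | h
    · exact h
    · exact absurd h (pow_ne_zero _ (by norm_num))
  have hGli : LinearIndependent ℝ (fun τ =>
      (⟨F τ, hmem τ⟩ : ↥(Wk n (Sset n n₁) (monomial v₀ (1:ℝ)) k))) :=
    LinearIndependent.of_comp (Wk n (Sset n n₁) (monomial v₀ (1:ℝ)) k).subtype hFli
  have hcard := hGli.fintype_card_le_finrank
  rwa [Fintype.card_fun, Fintype.card_fin, Fintype.card_fin] at hcard

lemma v_eq {m₁ m₂ : ℕ} (a b : Fin n) :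
    (X (Sum.inl a) ^ m₁ * X (Sum.inr b) ^ m₂ : MvPolynomial (Fin n ⊕ Fin n) ℝ)
      = monomial (Finsupp.single (Sum.inl a) m₁ + Finsupp.single (Sum.inr b) m₂) 1 := by
  rw [X_pow_eq_monomial, X_pow_eq_monomial, monomial_mul, one_mul]

lemma v₀_mem_Dk {n₁ m₁ m₂ : ℕ} (a b : Fin n) (ha : (a : ℕ) = n₁) :
    (Finsupp.single (Sum.inl a) m₁ + Finsupp.single (Sum.inr b) m₂) ∈ Dk n n₁ m₁ m₂ 0 := by
  refine ⟨?_, ?_, ?_⟩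
  · rw [zstat_add, zstat_single, zstat_single]
    simp [cY]
  · rw [zstat_add, zstat_single, zstat_single]
    simp only [cL, Sum.elim_inl, Sum.elim_inr, ha]
    rw [if_neg (lt_irrefl n₁)]
    ring
  · rw [zstat_add, zstat_single, zstat_single]
    simp [cX]

end Stmt10

open Stmt10 in
/-- v = x_{n₁+1}^{m₁} yₙ^{m₂} (0-based: x-index n₁, y-index n−1). -/
theorem stmt_10 (n n₁ m₁ m₂ : ℕ) (hn : 2 ≤ n) (h1 : 1 ≤ n₁) (h2 : n₁ + 1 < n) :
    ∃ c₁ c₂ : ℝ, 0 < c₁ ∧ 0 < c₂ ∧ ∃ K : ℕ, ∀ k ≥ K,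
      c₁ * (k : ℝ) ^ (n - 1) ≤
        (Module.finrank ℝ (Wk n (Sset n n₁)
          (X (Sum.inl (⟨n₁, by omega⟩ : Fin n)) ^ m₁ *
            X (Sum.inr (⟨n - 1, by omega⟩ : Fin n)) ^ m₂) k) : ℝ) ∧
      (Module.finrank ℝ (Wk n (Sset n n₁)
          (X (Sum.inl (⟨n₁, by omega⟩ : Fin n)) ^ m₁ *
            X (Sum.inr (⟨n - 1, by omega⟩ : Fin n)) ^ m₂) k) : ℝ) ≤
        c₂ * (k : ℝ) ^ (n - 1) := by
  have hnR : (0:ℝ) < n := by exact_mod_cast (by omega : 0 < n)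
  refine ⟨(1/(n:ℝ))^(n-1), ((m₂:ℝ)+1)^n * ((m₁:ℝ)+3)^(n-1), pow_pos (by positivity) _,
    by positivity, 1, fun k hk => ?_⟩
  have hkR : (1:ℝ) ≤ k := by exact_mod_cast hk
  set a : Fin n := ⟨n₁, by omega⟩ with hadef
  set b : Fin n := ⟨n - 1, by omega⟩ with hbdef
  rw [v_eq a b]
  have hv := v₀_mem_Dk (n₁ := n₁) (m₁ := m₁) (m₂ := m₂) a b rfl
  obtain ⟨hfin, hup⟩ := finrank_Wk_le (n₁ := n₁) (m₁ := m₁) (m₂ := m₂) (k := k)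
    (by omega) h1 hv
  have hlow := card_le_finrank_Wk (m₁ := m₁) (m₂ := m₂) (k := k) h1 h2 a b rfl rfl hfin
  set q := k / (n - 1) with hqdef
  constructor
  · -- lower bound
    have hqk : k ≤ n * (q + 1) := by
      have hdm := Nat.div_add_mod k (n - 1)
      rw [← hqdef] at hdm
      have hm : k % (n - 1) < n - 1 := Nat.mod_lt _ (by omega)
      calc k ≤ (n - 1) * q + (n - 1) := by omega
        _ = (n - 1) * (q + 1) := by ring
        _ ≤ n * (q + 1) := Nat.mul_le_mul (by omega) (le_refl _)
    have hdiv : (k : ℝ) / n ≤ ((q + 1 : ℕ) : ℝ) := by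
      rw [div_le_iff₀ hnR]
      have : (k:ℝ) ≤ (n:ℝ) * ((q:ℝ) + 1) := by exact_mod_cast hqk
      push_cast
      linarith
    calc (1/(n:ℝ))^(n-1) * (k:ℝ)^(n-1) = ((k:ℝ)/n)^(n-1) := by
          rw [← mul_pow, one_div, inv_mul_eq_div]
      _ ≤ (((q + 1 : ℕ) : ℝ))^(n-1) := pow_le_pow_left₀ (by positivity) hdiv _
      _ = (((q + 1)^(n-1) : ℕ) : ℝ) := by push_cast; ring
      _ ≤ _ := Nat.cast_le.2 hlow
  · -- upper bound
    calc (Module.finrank ℝ ↥(Wk n (Sset n n₁)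
          ((monomial (Finsupp.single (Sum.inl a) m₁ + Finsupp.single (Sum.inr b) m₂)) 1) k) : ℝ)
        ≤ (((m₂ + 1) ^ n * (m₁ + 2 * k + 1) ^ (n - 1) : ℕ) : ℝ) := Nat.cast_le.2 hup
      _ = ((m₂:ℝ) + 1) ^ n * ((m₁:ℝ) + 2*k + 1) ^ (n - 1) := by push_cast; ring
      _ ≤ ((m₂:ℝ) + 1) ^ n * (((m₁:ℝ) + 3) * k) ^ (n - 1) := by
          refine mul_le_mul_of_nonneg_left (pow_le_pow_left₀ (by positivity) ?_ _) (by positivity)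
          nlinarith [Nat.cast_nonneg (α := ℝ) m₁]
      _ = ((m₂:ℝ) + 1) ^ n * ((m₁:ℝ) + 3) ^ (n - 1) * (k:ℝ) ^ (n - 1) := by
          rw [mul_pow, mul_assoc]
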